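/- Let G be a finite simple connected bipartite graph and let G' be obtained from G by adjoining a new vertex joined by an edge to some vertex of G. Then the Laplacian spectral radius of G' is strictly greater than that of G: λ(G') > λ(G). -/

import Mathlib

open Matrix Finset

section helpers

variable {n : Type*} [Fintype n] [DecidableEq n]

lemma aux_psd {M : Matrix n n ℝ} (hM : M.IsHermitian) {lam : ℝ}
    (h : IsGreatest (spectrum ℝ M) lam) :
    (lam • (1 : Matrix n n ℝ) - M).PosSemidef := by
  have hH : (lam • (1 : Matrix n n ℝ) - M).IsHermitian := by
    have h1 : (lam • (1 : Matrix n n ℝ)).IsHermitian := by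
      simp [Matrix.IsHermitian, Matrix.conjTranspose_smul]
    exact h1.sub hM
  apply hH.posSemidef_iff_eigenvalues_nonneg.mpr
  intro i
  have hs := hH.eigenvalues_mem_spectrum_real i
  have hmem : lam - hH.eigenvalues i ∈ spectrum ℝ M := by
    rw [spectrum.mem_iff] at hs ⊢
    intro hu
    apply hs
    have : algebraMap ℝ (Matrix n n ℝ) (hH.eigenvalues i) - (lam • 1 - M)
        = -(algebraMap ℝ (Matrix n n ℝ) (lam - hH.eigenvalues i) - M) := by
      rw [Algebra.algebraMap_eq_smul_one, Algebra.algebraMap_eq_smul_one, sub_smul]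
      abel
    rw [this]
    exact hu.neg
  have := h.2 hmem
  rw [Pi.zero_apply]
  linarith

lemma aux_bound {M : Matrix n n ℝ} (hM : M.IsHermitian) {lam : ℝ}
    (h : IsGreatest (spectrum ℝ M) lam) (x : n → ℝ) :
    x ⬝ᵥ (M *ᵥ x) ≤ lam * (x ⬝ᵥ x) := by
  have h2 := (aux_psd hM h).dotProduct_mulVec_nonneg x
  simp only [star_trivial, sub_mulVec, dotProduct_sub, smul_mulVec, one_mulVec,
    dotProduct_smul, smul_eq_mul] at h2
  linarith

lemma aux_eq {M : Matrix n n ℝ} (hM : M.IsHermitian) {lam : ℝ}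
    (h : IsGreatest (spectrum ℝ M) lam) {x : n → ℝ}
    (hq : x ⬝ᵥ (M *ᵥ x) = lam * (x ⬝ᵥ x)) : M *ᵥ x = lam • x := by
  have h0 : star x ⬝ᵥ ((lam • (1 : Matrix n n ℝ) - M) *ᵥ x) = 0 := by
    simp only [star_trivial, sub_mulVec, dotProduct_sub, smul_mulVec, one_mulVec,
      dotProduct_smul, smul_eq_mul]
    linarith
  have h1 := ((aux_psd hM h).dotProduct_mulVec_zero_iff x).1 h0
  rw [sub_mulVec, sub_eq_zero] at h1
  rw [← h1, smul_mulVec, one_mulVec]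

lemma aux_exists {M : Matrix n n ℝ} {lam : ℝ} (h : lam ∈ spectrum ℝ M) :
    ∃ x : n → ℝ, x ≠ 0 ∧ M *ᵥ x = lam • x := by
  rw [spectrum.mem_iff, Matrix.isUnit_iff_isUnit_det, isUnit_iff_ne_zero, not_ne_iff] at h
  obtain ⟨v, hv0, hv⟩ := (Matrix.exists_mulVec_eq_zero_iff).2 h
  refine ⟨v, hv0, ?_⟩
  rw [Algebra.algebraMap_eq_smul_one, sub_mulVec, sub_eq_zero] at hv
  rw [← hv, smul_mulVec, one_mulVec]

lemma lap_quad (G : SimpleGraph n) [DecidableRel G.Adj] (x : n → ℝ) :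
    x ⬝ᵥ (G.lapMatrix ℝ *ᵥ x) =
      (∑ i, ∑ j, if G.Adj i j then (x i - x j)^2 else 0) / 2 := by
  rw [← Matrix.toLinearMap₂'_apply', SimpleGraph.lapMatrix_toLinearMap₂']

end helpers

theorem stmt_4 {V : Type*} [Fintype V] [DecidableEq V]
    (G : SimpleGraph V) [DecidableRel G.Adj]
    (hconn : G.Connected) (hbip : G.Colorable 2)
    (v₀ : V)
    (G' : SimpleGraph (Option V)) [DecidableRel G'.Adj]
    (hG' : ∀ a b : Option V, G'.Adj a b ↔
      ((∃ u v : V, a = some u ∧ b = some v ∧ G.Adj u v) ∨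
        (a = none ∧ b = some v₀) ∨ (a = some v₀ ∧ b = none)))
    (lam lam' : ℝ)
    (hlam : IsGreatest (spectrum ℝ (G.lapMatrix ℝ)) lam)
    (hlam' : IsGreatest (spectrum ℝ (G'.lapMatrix ℝ)) lam') :
    lam' > lam := by
  classical
  obtain ⟨c⟩ := hbip
  set L := G.lapMatrix ℝ with hLdef
  have hL : L.IsHermitian := (SimpleGraph.posSemidef_lapMatrix ℝ G).1
  have hL' : (G'.lapMatrix ℝ).IsHermitian := (SimpleGraph.posSemidef_lapMatrix ℝ G').1
  -- sign function from 2-coloring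
  set ε : V → ℝ := fun u => if c u = 0 then 1 else -1 with hεdef
  have hε2 : ∀ u, ε u * ε u = 1 := by
    intro u; by_cases h : c u = 0 <;> simp [hεdef, h]
  have hεadj : ∀ u v, G.Adj u v → ε u * ε v = -1 := by
    intro u v h
    have hne := c.valid h
    have h2 : ∀ a : Fin 2, a = 0 ∨ a = 1 := by decide
    rcases h2 (c u) with h3 | h3 <;> rcases h2 (c v) with h4 | h4 <;>
      simp [hεdef, h3, h4] at hne ⊢
  -- top eigenvector
  obtain ⟨x, hx0, hxe⟩ := aux_exists hlam.1
  set w : V → ℝ := fun u => |x u| with hwdef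
  have hw0 : ∀ u, 0 ≤ w u := fun u => abs_nonneg _
  set x' : V → ℝ := fun u => ε u * w u with hx'def
  have hnorm : x' ⬝ᵥ x' = x ⬝ᵥ x := by
    apply Finset.sum_congr rfl
    intro u _
    have := hε2 u
    have h2 : |x u| * |x u| = x u * x u := abs_mul_abs_self _
    simp only [hx'def, hwdef]
    nlinarith
  have hxx : (0:ℝ) < x ⬝ᵥ x := by
    rcases (Finset.sum_nonneg (fun u _ => mul_self_nonneg (x u))).lt_or_eq with h | h
    · exact h
    · exfalso
      apply hx0
      funext u
      have := (Finset.sum_eq_zero_iff_of_nonneg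
        (fun u _ => mul_self_nonneg (x u))).1 h.symm u (Finset.mem_univ u)
      exact mul_self_eq_zero.1 this
  have hq_x : x ⬝ᵥ (L *ᵥ x) = lam * (x ⬝ᵥ x) := by
    rw [hxe, dotProduct_smul, smul_eq_mul]
  have hq_mono : x ⬝ᵥ (L *ᵥ x) ≤ x' ⬝ᵥ (L *ᵥ x') := by
    rw [hLdef, lap_quad, lap_quad]
    gcongr with i _ j _
    by_cases h : G.Adj i j
    · simp only [h, if_true]
      have h1 := hεadj i j h
      have h2 := hε2 i
      have h3 := hε2 j
      have h4 : |x i| * |x j| = |x i * x j| := (abs_mul _ _).symm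
      have h5 : -(x i * x j) ≤ |x i * x j| := neg_le_abs _
      simp only [hx'def, hwdef]
      have e : (ε i * |x i| - ε j * |x j|)^2 =
          (ε i * ε i) * (|x i| * |x i|) + (ε j * ε j) * (|x j| * |x j|)
            - 2 * ((ε i * ε j) * (|x i| * |x j|)) := by ring
      rw [h1, h2, h3, abs_mul_abs_self, abs_mul_abs_self, h4] at e
      rw [e]
      nlinarith [h5]
    · simp [h]
  have hq_x' : x' ⬝ᵥ (L *ᵥ x') = lam * (x' ⬝ᵥ x') := by
    refine le_antisymm (aux_bound hL hlam x') ?_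
    rw [hnorm, ← hq_x]; exact hq_mono
  have hex' : L *ᵥ x' = lam • x' := aux_eq hL hlam hq_x'
  -- propagation of zeros
  have hLentry : ∀ u v : V, u ≠ v → L u v = -(if G.Adj u v then (1:ℝ) else 0) := by
    intro u v huv
    simp [hLdef, SimpleGraph.lapMatrix, SimpleGraph.degMatrix, Matrix.sub_apply,
      Matrix.diagonal_apply_ne _ huv, SimpleGraph.adjMatrix_apply]
  have hzero : ∀ u, w u = 0 → ∀ v, G.Adj u v → w v = 0 := by
    intro u hu v huv
    have h1 : (L *ᵥ x') u = lam * x' u := by rw [hex']; simp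
    have h2 : x' u = 0 := by simp [hx'def, hu]
    have h3 : ∑ t, (ε u * L u t * ε t) * w t = 0 := by
      have h4 : (L *ᵥ x') u = ∑ t, L u t * x' t := rfl
      have h5 : ∑ t, L u t * x' t = 0 := by rw [← h4, h1, h2, mul_zero]
      have h6 : ε u * ∑ t, L u t * x' t = ∑ t, (ε u * L u t * ε t) * w t := by
        rw [Finset.mul_sum]
        apply Finset.sum_congr rfl
        intro t _
        simp only [hx'def]; ring
      rw [← h6, h5, mul_zero]
    have h7 : ∀ t ∈ Finset.univ, (0:ℝ) ≤ (ε u * L u t * ε t) * w t := by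
      intro t _
      by_cases ht : t = u
      · subst ht; rw [hu, mul_zero]
      · rw [hLentry u t (Ne.symm ht)]
        by_cases hadj : G.Adj u t
        · have := hεadj u t hadj
          simp only [hadj, if_true]
          have := hw0 t
          nlinarith
        · simp [hadj]
    have h8 := (Finset.sum_eq_zero_iff_of_nonneg h7).1 h3 v (Finset.mem_univ v)
    have hvu : v ≠ u := fun h => G.irrefl (h ▸ huv)
    rw [hLentry u v (Ne.symm hvu)] at h8
    have h9 := hεadj u v huv
    simp only [huv, if_true] at h8
    nlinarith [h8]
  have hwv₀ : 0 < w v₀ := by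
    rcases (hw0 v₀).lt_or_eq with h | h
    · exact h
    · exfalso
      have hall : ∀ (a b : V), G.Walk a b → w a = 0 → w b = 0 := by
        intro a b p
        induction p with
        | nil => exact id
        | cons hadj q ih => intro ha; exact ih (hzero _ ha _ hadj)
      apply hx0
      funext u
      obtain ⟨p⟩ := hconn.preconnected v₀ u
      have := hall v₀ u p h.symm
      simpa [hwdef] using this
  -- extend to G'
  set t : Option V → ℝ := fun a => a.elim 0 x' with htdef
  have hAd1 : ¬ G'.Adj none none := by
    rw [hG']; simp
  have hAd2 : ∀ v : V, G'.Adj none (some v) ↔ v = v₀ := by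
    intro v; rw [hG']; simp
  have hAd3 : ∀ u : V, G'.Adj (some u) none ↔ u = v₀ := by
    intro u; rw [hG']; simp
  have hAd4 : ∀ u v : V, G'.Adj (some u) (some v) ↔ G.Adj u v := by
    intro u v; rw [hG']; simp
  have htt : t ⬝ᵥ t = x' ⬝ᵥ x' := by
    rw [dotProduct, dotProduct, Fintype.sum_option]
    simp [htdef]
  have hqt : t ⬝ᵥ (G'.lapMatrix ℝ *ᵥ t) = x' ⬝ᵥ (L *ᵥ x') + w v₀ ^ 2 := by
    rw [lap_quad, hLdef, lap_quad]
    rw [Fintype.sum_option]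
    have e1 : (∑ j : Option V, if G'.Adj none j then (t none - t j)^2 else 0)
        = x' v₀ ^ 2 := by
      rw [Fintype.sum_option]
      simp only [hAd1, if_false, hAd2, htdef, Option.elim]
      rw [Finset.sum_ite_eq' Finset.univ v₀ (fun v => (0 - x' v)^2)]
      simp
    have e2 : ∀ u : V, (∑ j : Option V, if G'.Adj (some u) j then (t (some u) - t j)^2 else 0)
        = (if u = v₀ then x' v₀ ^ 2 else 0)
          + ∑ v : V, if G.Adj u v then (x' u - x' v)^2 else 0 := by
      intro u
      rw [Fintype.sum_option]
      congr 1
      · by_cases h : u = v₀ <;> simp [hAd3, h, htdef]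
      · apply Finset.sum_congr rfl
        intro v _
        simp [hAd4, htdef]
    rw [e1]
    rw [Finset.sum_congr rfl (fun u _ => e2 u)]
    rw [Finset.sum_add_distrib]
    rw [Finset.sum_ite_eq' Finset.univ v₀ (fun _ => x' v₀ ^ 2)]
    have hx'v₀ : x' v₀ ^ 2 = w v₀ ^ 2 := by
      have := hε2 v₀
      simp only [hx'def]
      nlinarith
    simp only [Finset.mem_univ, if_true, hx'v₀]
    ring
  -- finish
  have hfin : lam * (x' ⬝ᵥ x') < lam' * (x' ⬝ᵥ x') := by
    calc lam * (x' ⬝ᵥ x') = x' ⬝ᵥ (L *ᵥ x') := hq_x'.symm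
    _ < x' ⬝ᵥ (L *ᵥ x') + w v₀ ^ 2 := by nlinarith [hwv₀]
    _ = t ⬝ᵥ (G'.lapMatrix ℝ *ᵥ t) := hqt.symm
    _ ≤ lam' * (t ⬝ᵥ t) := aux_bound hL' hlam' t
    _ = lam' * (x' ⬝ᵥ x') := by rw [htt]
  have hpos : (0:ℝ) < x' ⬝ᵥ x' := by rw [hnorm]; exact hxx
  exact lt_of_mul_lt_mul_right hfin hpos.le
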